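/- Conversely: if α, β, φ₃, ψ₃ are smooth functions on Ω satisfying Δ(λ)α + k²α = 0, Δ(λ)β + k²β = 0, Δ(λ)φ₃ + k²φ₃ = 0, Δ(λ)ψ₃ + k²ψ₃ = 0 with k² − λ² ≠ 0, and φ₁, φ₂, ψ₁, ψ₂ are defined by the formulas φ₁ = (k²−λ²)^{−1}[iλ∂₁φ₃ + ik∂₂ψ₃ − iλ∂₂α + ik∂₁β], φ₂ = (k²−λ²)^{−1}[iλ∂₂φ₃ − ik∂₁ψ₃ + iλ∂₁α + ik∂₂β], ψ₁ = (k²−λ²)^{−1}[−ik∂₂φ₃ + iλ∂₁ψ₃ − ik∂₁α − iλ∂₂β], ψ₂ = (k²−λ²)^{−1}[ik∂₁φ₃ + iλ∂₂ψ₃ − ik∂₂α + iλ∂₁β], then (φ, α, ψ, β) satisfies the pencil equations 𝔄(λ,k)(φ,α,ψ,β) = 0 on Ω. -/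

import Mathlib

noncomputable def pd2 (i : Fin 2) (f : (Fin 2 → ℝ) → ℂ) (x : Fin 2 → ℝ) : ℂ :=
  fderiv ℝ f x (Pi.single i 1)

noncomputable def gradl (lam : ℂ) (a : (Fin 2 → ℝ) → ℂ) (x : Fin 2 → ℝ) : Fin 3 → ℂ :=
  ![pd2 0 a x, pd2 1 a x, Complex.I * lam * a x]

noncomputable def divl (lam : ℂ) (F : (Fin 2 → ℝ) → Fin 3 → ℂ) (x : Fin 2 → ℝ) : ℂ :=
  pd2 0 (fun y => F y 0) x + pd2 1 (fun y => F y 1) x + Complex.I * lam * F x 2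

noncomputable def rotl (lam : ℂ) (F : (Fin 2 → ℝ) → Fin 3 → ℂ) (x : Fin 2 → ℝ) : Fin 3 → ℂ :=
  ![pd2 1 (fun y => F y 2) x - Complex.I * lam * F x 1,
    Complex.I * lam * F x 0 - pd2 0 (fun y => F y 2) x,
    pd2 0 (fun y => F y 1) x - pd2 1 (fun y => F y 0) x]

noncomputable def lapl (lam : ℂ) (f : (Fin 2 → ℝ) → ℂ) (x : Fin 2 → ℝ) : ℂ :=
  pd2 0 (pd2 0 f) x + pd2 1 (pd2 1 f) x - lam ^ 2 * f x

def ccross (a b : Fin 3 → ℂ) : Fin 3 → ℂ :=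
  ![a 1 * b 2 - a 2 * b 1, a 2 * b 0 - a 0 * b 2, a 0 * b 1 - a 1 * b 0]

private lemma pd2_congrOn {Ω : Set (Fin 2 → ℝ)} (hΩ : IsOpen Ω) {f g : (Fin 2 → ℝ) → ℂ}
    {x : Fin 2 → ℝ} (hx : x ∈ Ω) (h : ∀ y ∈ Ω, f y = g y) (j : Fin 2) :
    pd2 j f x = pd2 j g x := by
  unfold pd2
  rw [Filter.EventuallyEq.fderiv_eq (Filter.eventuallyEq_of_mem (hΩ.mem_nhds hx) h)]

private lemma pd2_contDiffAt {f : (Fin 2 → ℝ) → ℂ} {x : Fin 2 → ℝ}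
    (hf : ContDiffAt ℝ (⊤ : ℕ∞) f x) (i : Fin 2) : ContDiffAt ℝ (⊤ : ℕ∞) (pd2 i f) x := by
  have h1 : ContDiffAt ℝ (⊤ : ℕ∞) (fderiv ℝ f) x := hf.fderiv_right (by exact_mod_cast (le_top : (⊤ + 1 : ℕ∞) ≤ ⊤))
  exact h1.clm_apply contDiffAt_const

private lemma pd2_diff {f : (Fin 2 → ℝ) → ℂ} {x : Fin 2 → ℝ}
    (hf : ContDiffAt ℝ (⊤ : ℕ∞) f x) (i : Fin 2) : DifferentiableAt ℝ (pd2 i f) x :=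
  (pd2_contDiffAt hf i).differentiableAt (by simp)

private lemma pd2_symm {f : (Fin 2 → ℝ) → ℂ} {x : Fin 2 → ℝ}
    (hf : ContDiffAt ℝ (⊤ : ℕ∞) f x) :
    pd2 1 (pd2 0 f) x = pd2 0 (pd2 1 f) x := by
  have h1 : ContDiffAt ℝ (⊤ : ℕ∞) (fderiv ℝ f) x :=
    hf.fderiv_right (by exact_mod_cast (le_top : (⊤ + 1 : ℕ∞) ≤ ⊤))
  have hd : DifferentiableAt ℝ (fderiv ℝ f) x :=
    h1.differentiableAt (by simp)
  have key : ∀ i j : Fin 2, pd2 j (pd2 i f) x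
      = fderiv ℝ (fderiv ℝ f) x (Pi.single j 1) (Pi.single i 1) := by
    intro i j
    unfold pd2
    rw [fderiv_clm_apply hd (differentiableAt_const _)]
    simp
  rw [key, key]
  exact (hf.isSymmSndFDerivAt (by simp [minSmoothness_of_isRCLikeNormedField]; exact WithTop.coe_le_coe.mpr (le_top : (2:ℕ∞) ≤ ⊤))) _ _

private lemma pd2_comb4 {f1 f2 f3 f4 : (Fin 2 → ℝ) → ℂ} {x : Fin 2 → ℝ}
    (h1 : DifferentiableAt ℝ f1 x) (h2 : DifferentiableAt ℝ f2 x)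
    (h3 : DifferentiableAt ℝ f3 x) (h4 : DifferentiableAt ℝ f4 x)
    (c a1 a2 a3 a4 : ℂ) (j : Fin 2) :
    pd2 j (fun y => c * (a1 * f1 y + a2 * f2 y + a3 * f3 y + a4 * f4 y)) x
      = c * (a1 * pd2 j f1 x + a2 * pd2 j f2 x + a3 * pd2 j f3 x + a4 * pd2 j f4 x) := by
  have H : HasFDerivAt (fun y => c * (a1 * f1 y + a2 * f2 y + a3 * f3 y + a4 * f4 y))
      (c • ((a1 • fderiv ℝ f1 x + a2 • fderiv ℝ f2 x) + a3 • fderiv ℝ f3 x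
        + a4 • fderiv ℝ f4 x)) x := by
    exact ((((h1.hasFDerivAt.const_mul a1).add (h2.hasFDerivAt.const_mul a2)).add
      (h3.hasFDerivAt.const_mul a3)).add (h4.hasFDerivAt.const_mul a4)).const_mul c
  unfold pd2
  rw [H.fderiv]
  simp [mul_add, mul_assoc]

theorem pencil_from_axial_helmholtz
    (Ω : Set (Fin 2 → ℝ)) (hΩ : IsOpen Ω) (k lam : ℂ) (hklam : k ^ 2 - lam ^ 2 ≠ 0)
    (φ ψ : (Fin 2 → ℝ) → Fin 3 → ℂ) (α β : (Fin 2 → ℝ) → ℂ)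
    (hα : ContDiffOn ℝ (⊤ : ℕ∞) α Ω) (hβ : ContDiffOn ℝ (⊤ : ℕ∞) β Ω)
    (hφ3 : ContDiffOn ℝ (⊤ : ℕ∞) (fun y => φ y 2) Ω)
    (hψ3 : ContDiffOn ℝ (⊤ : ℕ∞) (fun y => ψ y 2) Ω)
    (hHα : ∀ x ∈ Ω, lapl lam α x + k ^ 2 * α x = 0)
    (hHβ : ∀ x ∈ Ω, lapl lam β x + k ^ 2 * β x = 0)
    (hHφ3 : ∀ x ∈ Ω, lapl lam (fun y => φ y 2) x + k ^ 2 * φ x 2 = 0)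
    (hHψ3 : ∀ x ∈ Ω, lapl lam (fun y => ψ y 2) x + k ^ 2 * ψ x 2 = 0)
    (hφ0 : ∀ x ∈ Ω, φ x 0 = (k ^ 2 - lam ^ 2)⁻¹ *
        (Complex.I * lam * pd2 0 (fun y => φ y 2) x + Complex.I * k * pd2 1 (fun y => ψ y 2) x
          - Complex.I * lam * pd2 1 α x + Complex.I * k * pd2 0 β x))
    (hφ1 : ∀ x ∈ Ω, φ x 1 = (k ^ 2 - lam ^ 2)⁻¹ *
        (Complex.I * lam * pd2 1 (fun y => φ y 2) x - Complex.I * k * pd2 0 (fun y => ψ y 2) x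
          + Complex.I * lam * pd2 0 α x + Complex.I * k * pd2 1 β x))
    (hψ0 : ∀ x ∈ Ω, ψ x 0 = (k ^ 2 - lam ^ 2)⁻¹ *
        (-(Complex.I * k * pd2 1 (fun y => φ y 2) x) + Complex.I * lam * pd2 0 (fun y => ψ y 2) x
          - Complex.I * k * pd2 0 α x - Complex.I * lam * pd2 1 β x))
    (hψ1 : ∀ x ∈ Ω, ψ x 1 = (k ^ 2 - lam ^ 2)⁻¹ *
        (Complex.I * k * pd2 0 (fun y => φ y 2) x + Complex.I * lam * pd2 1 (fun y => ψ y 2) x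
          - Complex.I * k * pd2 1 α x + Complex.I * lam * pd2 0 β x)) :
    ∀ x ∈ Ω,
      (∀ j, Complex.I * rotl lam ψ x j + Complex.I * gradl lam β x j - k * φ x j = 0) ∧
      (-Complex.I * divl lam ψ x - k * α x = 0) ∧
      (∀ j, -Complex.I * rotl lam φ x j - Complex.I * gradl lam α x j - k * ψ x j = 0) ∧
      (Complex.I * divl lam φ x - k * β x = 0) := by
  intro x hx
  have c : ℂ := (k ^ 2 - lam ^ 2)⁻¹
  -- smoothness at x
  have cA : ContDiffAt ℝ (⊤ : ℕ∞) α x := hα.contDiffAt (hΩ.mem_nhds hx)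
  have cB : ContDiffAt ℝ (⊤ : ℕ∞) β x := hβ.contDiffAt (hΩ.mem_nhds hx)
  have cF : ContDiffAt ℝ (⊤ : ℕ∞) (fun y => φ y 2) x := hφ3.contDiffAt (hΩ.mem_nhds hx)
  have cG : ContDiffAt ℝ (⊤ : ℕ∞) (fun y => ψ y 2) x := hψ3.contDiffAt (hΩ.mem_nhds hx)
  -- symmetry of second derivatives
  have sA := pd2_symm cA
  have sB := pd2_symm cB
  have sF := pd2_symm cF
  have sG := pd2_symm cG
  -- Helmholtz rewrites
  have eA : pd2 1 (pd2 1 α) x = (lam ^ 2 - k ^ 2) * α x - pd2 0 (pd2 0 α) x := by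
    have h := hHα x hx; unfold lapl at h; linear_combination h
  have eB : pd2 1 (pd2 1 β) x = (lam ^ 2 - k ^ 2) * β x - pd2 0 (pd2 0 β) x := by
    have h := hHβ x hx; unfold lapl at h; linear_combination h
  have eF : pd2 1 (pd2 1 (fun y => φ y 2)) x
      = (lam ^ 2 - k ^ 2) * φ x 2 - pd2 0 (pd2 0 (fun y => φ y 2)) x := by
    have h := hHφ3 x hx; unfold lapl at h; linear_combination h
  have eG : pd2 1 (pd2 1 (fun y => ψ y 2)) x
      = (lam ^ 2 - k ^ 2) * ψ x 2 - pd2 0 (pd2 0 (fun y => ψ y 2)) x := by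
    have h := hHψ3 x hx; unfold lapl at h; linear_combination h
  -- expansions of derivatives of transverse components
  have Dφ0 : ∀ j, pd2 j (fun y => φ y 0) x
      = (k ^ 2 - lam ^ 2)⁻¹ * ((Complex.I * lam) * pd2 j (pd2 0 (fun y => φ y 2)) x
        + (Complex.I * k) * pd2 j (pd2 1 (fun y => ψ y 2)) x
        + (-(Complex.I * lam)) * pd2 j (pd2 1 α) x
        + (Complex.I * k) * pd2 j (pd2 0 β) x) := by
    intro j
    rw [pd2_congrOn hΩ hx (g := fun y =>
        (k ^ 2 - lam ^ 2)⁻¹ * ((Complex.I * lam) * pd2 0 (fun z => φ z 2) y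
          + (Complex.I * k) * pd2 1 (fun z => ψ z 2) y
          + (-(Complex.I * lam)) * pd2 1 α y + (Complex.I * k) * pd2 0 β y))
      (fun y hy => by rw [hφ0 y hy]; ring) j]
    exact pd2_comb4 (pd2_diff (hφ3.contDiffAt (hΩ.mem_nhds hx)) 0)
      (pd2_diff (hψ3.contDiffAt (hΩ.mem_nhds hx)) 1)
      (pd2_diff (hα.contDiffAt (hΩ.mem_nhds hx)) 1)
      (pd2_diff (hβ.contDiffAt (hΩ.mem_nhds hx)) 0) _ _ _ _ _ j
  have Dφ1 : ∀ j, pd2 j (fun y => φ y 1) x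
      = (k ^ 2 - lam ^ 2)⁻¹ * ((Complex.I * lam) * pd2 j (pd2 1 (fun y => φ y 2)) x
        + (-(Complex.I * k)) * pd2 j (pd2 0 (fun y => ψ y 2)) x
        + (Complex.I * lam) * pd2 j (pd2 0 α) x
        + (Complex.I * k) * pd2 j (pd2 1 β) x) := by
    intro j
    rw [pd2_congrOn hΩ hx (g := fun y =>
        (k ^ 2 - lam ^ 2)⁻¹ * ((Complex.I * lam) * pd2 1 (fun z => φ z 2) y
          + (-(Complex.I * k)) * pd2 0 (fun z => ψ z 2) y
          + (Complex.I * lam) * pd2 0 α y + (Complex.I * k) * pd2 1 β y))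
      (fun y hy => by rw [hφ1 y hy]; ring) j]
    exact pd2_comb4 (pd2_diff (hφ3.contDiffAt (hΩ.mem_nhds hx)) 1)
      (pd2_diff (hψ3.contDiffAt (hΩ.mem_nhds hx)) 0)
      (pd2_diff (hα.contDiffAt (hΩ.mem_nhds hx)) 0)
      (pd2_diff (hβ.contDiffAt (hΩ.mem_nhds hx)) 1) _ _ _ _ _ j
  have Dψ0 : ∀ j, pd2 j (fun y => ψ y 0) x
      = (k ^ 2 - lam ^ 2)⁻¹ * ((-(Complex.I * k)) * pd2 j (pd2 1 (fun y => φ y 2)) x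
        + (Complex.I * lam) * pd2 j (pd2 0 (fun y => ψ y 2)) x
        + (-(Complex.I * k)) * pd2 j (pd2 0 α) x
        + (-(Complex.I * lam)) * pd2 j (pd2 1 β) x) := by
    intro j
    rw [pd2_congrOn hΩ hx (g := fun y =>
        (k ^ 2 - lam ^ 2)⁻¹ * ((-(Complex.I * k)) * pd2 1 (fun z => φ z 2) y
          + (Complex.I * lam) * pd2 0 (fun z => ψ z 2) y
          + (-(Complex.I * k)) * pd2 0 α y + (-(Complex.I * lam)) * pd2 1 β y))
      (fun y hy => by rw [hψ0 y hy]; ring) j]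
    exact pd2_comb4 (pd2_diff (hφ3.contDiffAt (hΩ.mem_nhds hx)) 1)
      (pd2_diff (hψ3.contDiffAt (hΩ.mem_nhds hx)) 0)
      (pd2_diff (hα.contDiffAt (hΩ.mem_nhds hx)) 0)
      (pd2_diff (hβ.contDiffAt (hΩ.mem_nhds hx)) 1) _ _ _ _ _ j
  have Dψ1 : ∀ j, pd2 j (fun y => ψ y 1) x
      = (k ^ 2 - lam ^ 2)⁻¹ * ((Complex.I * k) * pd2 j (pd2 0 (fun y => φ y 2)) x
        + (Complex.I * lam) * pd2 j (pd2 1 (fun y => ψ y 2)) x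
        + (-(Complex.I * k)) * pd2 j (pd2 1 α) x
        + (Complex.I * lam) * pd2 j (pd2 0 β) x) := by
    intro j
    rw [pd2_congrOn hΩ hx (g := fun y =>
        (k ^ 2 - lam ^ 2)⁻¹ * ((Complex.I * k) * pd2 0 (fun z => φ z 2) y
          + (Complex.I * lam) * pd2 1 (fun z => ψ z 2) y
          + (-(Complex.I * k)) * pd2 1 α y + (Complex.I * lam) * pd2 0 β y))
      (fun y hy => by rw [hψ1 y hy]; ring) j]
    exact pd2_comb4 (pd2_diff (hφ3.contDiffAt (hΩ.mem_nhds hx)) 0)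
      (pd2_diff (hψ3.contDiffAt (hΩ.mem_nhds hx)) 1)
      (pd2_diff (hα.contDiffAt (hΩ.mem_nhds hx)) 1)
      (pd2_diff (hβ.contDiffAt (hΩ.mem_nhds hx)) 0) _ _ _ _ _ j
  have hIsq : Complex.I * Complex.I = -1 := Complex.I_mul_I
  refine ⟨?_, ?_, ?_, ?_⟩
  · intro j
    fin_cases j <;>
      simp [rotl, gradl]
    · rw [hψ1 x hx, hφ0 x hx]
      field_simp
      ring_nf
      try simp only [show Complex.I ^ 3 = -Complex.I by rw [pow_succ, Complex.I_sq]; ring,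
        Complex.I_sq]
      try ring
    · rw [hψ0 x hx, hφ1 x hx]
      field_simp
      ring_nf
      try simp only [show Complex.I ^ 3 = -Complex.I by rw [pow_succ, Complex.I_sq]; ring,
        Complex.I_sq]
      try ring
    · rw [Dψ1 0, Dψ0 1, sG, sA, eF, eB]
      field_simp
      ring_nf
      try simp only [show Complex.I ^ 3 = -Complex.I by rw [pow_succ, Complex.I_sq]; ring,
        Complex.I_sq]
      try ring
  · simp only [divl]
    rw [Dψ0 0, Dψ1 1, sF, sB, eG, eA]
    field_simp
    ring_nf
    try simp only [show Complex.I ^ 3 = -Complex.I by rw [pow_succ, Complex.I_sq]; ring,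
      Complex.I_sq]
    try ring
  · intro j
    fin_cases j <;>
      simp [rotl, gradl]
    · rw [hφ1 x hx, hψ0 x hx]
      field_simp
      ring_nf
      try simp only [show Complex.I ^ 3 = -Complex.I by rw [pow_succ, Complex.I_sq]; ring,
        Complex.I_sq]
      try ring
    · rw [hφ0 x hx, hψ1 x hx]
      field_simp
      ring_nf
      try simp only [show Complex.I ^ 3 = -Complex.I by rw [pow_succ, Complex.I_sq]; ring,
        Complex.I_sq]
      try ring
    · rw [Dφ1 0, Dφ0 1, sF, sB, eG, eA]
      field_simp
      ring_nf
      try simp only [show Complex.I ^ 3 = -Complex.I by rw [pow_succ, Complex.I_sq]; ring,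
        Complex.I_sq]
      try ring
  · simp only [divl]
    rw [Dφ0 0, Dφ1 1, sG, sA, eF, eB]
    field_simp
    ring_nf
    try simp only [show Complex.I ^ 3 = -Complex.I by rw [pow_succ, Complex.I_sq]; ring,
      Complex.I_sq]
    try ring
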